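/- Let G be a graph and let T ⊆ Ê(G) be a discrete subspace of Ê(G). Then there is a family {C_ω : ω ∈ T ∩ Ω_E(G)} of connected subgraphs of G such that: (i) C_{ω₁} ∩ C_{ω₂} = ∅ whenever ω₁ ≠ ω₂; and (ii) for every ω ∈ T ∩ Ω_E(G), the cut F_ω := δ(V(C_ω)) is finite and Ê(F_ω, ω) ∩ T = {ω}. -/

import Mathlib

/-!
Formalization of definitions and a statement from
"Edge-connectivity and edge-ends in infinite graphs" (arXiv:2404.17106).
-/

universe u

namespace EdgeEndPaper

variable {V : Type u}

/-- A ray in `G`: a one-way infinite path `v₀v₁v₂…`. -/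
structure Ray (G : SimpleGraph V) : Type u where
  f : ℕ → V
  inj : Function.Injective f
  adj : ∀ n : ℕ, G.Adj (f n) (f (n + 1))

/-- A double ray in `G`: a two-way infinite path. -/
structure DoubleRay (G : SimpleGraph V) : Type u where
  f : ℤ → V
  inj : Function.Injective f
  adj : ∀ n : ℤ, G.Adj (f n) (f (n + 1))

variable (G : SimpleGraph V)

/-- The tails of the rays `r` and `s` lie in the same connected component of `G - F`
(deletion of the edges in `F`). -/
def SameComp (F : Set (Sym2 V)) (r s : Ray G) : Prop :=
  ∃ N : ℕ, ∀ m n : ℕ, N ≤ m → N ≤ n → (G.deleteEdges F).Reachable (r.f m) (s.f n)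

/-- Edge-equivalence of rays: no finite edge set separates the tails of `r` and `s`. -/
def EdgeEquiv (r s : Ray G) : Prop :=
  ∀ F : Set (Sym2 V), F.Finite → SameComp G F r s

/-- The edge-end space `Ω_E(G)`. -/
def EdgeEnd : Type u := Quot (EdgeEquiv G)

/-- The edge-end `[r]_E` of a ray `r`. -/
def Ray.edgeEnd {G : SimpleGraph V} (r : Ray G) : EdgeEnd G := Quot.mk _ r

/-- `C_E(F, ω)` : the vertices of the connected component of `G - F` in which `ω` has a tail. -/
def CE (F : Set (Sym2 V)) (ω : EdgeEnd G) : Set V :=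
  {v | ∃ r : Ray G, r.edgeEnd = ω ∧ ∃ N : ℕ, ∀ n : ℕ, N ≤ n →
    (G.deleteEdges F).Reachable (r.f n) v}

/-- `Ω_E(F, ω)` : the edge-ends whose rays have tails in the same component of `G - F`
as the rays of `ω`. -/
def OmegaE (F : Set (Sym2 V)) (ω : EdgeEnd G) : Set (EdgeEnd G) :=
  {η | ∃ r s : Ray G, r.edgeEnd = ω ∧ s.edgeEnd = η ∧ SameComp G F r s}

/-- The topology on `Ω_E(G)`, with the sets `Ω_E(F, ω)` (for finite `F ⊆ E(G)`) as a basis. -/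
def edgeEndTopology : TopologicalSpace (EdgeEnd G) :=
  .generateFrom {U | ∃ (F : Set (Sym2 V)) (ω : EdgeEnd G),
    F.Finite ∧ F ⊆ G.edgeSet ∧ U = OmegaE G F ω}

/-- `Ê(F, ω) = C_E(F, ω) ∪ Ω_E(F, ω)`, inside `Ê(G) = V(G) ⊔ Ω_E(G)`. -/
def EHatBasic (F : Set (Sym2 V)) (ω : EdgeEnd G) : Set (V ⊕ EdgeEnd G) :=
  Sum.inl '' CE G F ω ∪ Sum.inr '' OmegaE G F ω

/-- The topology on `Ê(G) = V(G) ∪ Ω_E(G)`: the vertex singletons together with the sets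
`Ê(F, ω)` (for finite `F ⊆ E(G)`) form a basis. -/
def eHatTopology : TopologicalSpace (V ⊕ EdgeEnd G) :=
  .generateFrom ({U | ∃ v : V, U = {Sum.inl v}} ∪
    {U | ∃ (F : Set (Sym2 V)) (ω : EdgeEnd G),
      F.Finite ∧ F ⊆ G.edgeSet ∧ U = EHatBasic G F ω})

/-- A vertex `v` edge-dominates the edge-end `ω` if `v ∈ C_E(F, ω)` for every finite `F`. -/
def EdgeDominates (v : V) (ω : EdgeEnd G) : Prop :=
  ∀ F : Set (Sym2 V), F.Finite → v ∈ CE G F ω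

/-- The cut `δ(X)`: the edges of `G` with one endpoint in `X` and the other outside of `X`. -/
def cut (X : Set V) : Set (Sym2 V) :=
  {e | e ∈ G.edgeSet ∧ ∃ u v : V, e = s(u, v) ∧ u ∈ X ∧ v ∉ X}

/-- The vertex set `C` induces a connected (nonempty) subgraph of `G`. -/
def ConnectedIn (C : Set V) : Prop :=
  C.Nonempty ∧ ∀ u ∈ C, ∀ v ∈ C, ∃ p : G.Walk u v, ∀ w ∈ p.support, w ∈ C


section Aux
variable {G}


/-- Edges of a ray are pairwise distinct. -/
lemma Ray.edge_inj (r : Ray G) : Function.Injective (fun k => s(r.f k, r.f (k+1))) := by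
  intro k j h
  simp only [Sym2.eq_iff] at h
  rcases h with ⟨h1, _⟩ | ⟨h1, h2⟩
  · exact r.inj h1
  · have e1 : k = j + 1 := r.inj h1
    have e2 : k + 1 = j := r.inj h2
    omega

lemma Ray.exists_avoid (r : Ray G) {F : Set (Sym2 V)} (hF : F.Finite) :
    ∃ N : ℕ, ∀ k, N ≤ k → s(r.f k, r.f (k+1)) ∉ F := by
  have hfin : {k : ℕ | s(r.f k, r.f (k+1)) ∈ F}.Finite := by
    apply Set.Finite.of_finite_image (f := fun k => s(r.f k, r.f (k+1)))
    · exact hF.subset (by rintro e ⟨k, hk, rfl⟩; exact hk)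
    · exact fun a _ b _ h => r.edge_inj h
  obtain ⟨b, hb⟩ := hfin.bddAbove
  exact ⟨b+1, fun k hk hmem => by have := hb hmem; omega⟩

lemma Ray.reach_of_avoid (r : Ray G) {F : Set (Sym2 V)} {N : ℕ}
    (h : ∀ k, N ≤ k → s(r.f k, r.f (k+1)) ∉ F) :
    ∀ m n, N ≤ m → N ≤ n → (G.deleteEdges F).Reachable (r.f m) (r.f n) := by
  have key : ∀ d, (G.deleteEdges F).Reachable (r.f N) (r.f (N + d)) := by
    intro d
    induction d with
    | zero => exact SimpleGraph.Reachable.refl _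
    | succ d ih =>
      refine ih.trans (SimpleGraph.Adj.reachable ?_)
      rw [SimpleGraph.deleteEdges_adj]
      exact ⟨r.adj _, h _ (Nat.le_add_right _ _), ⟩
  intro m n hm hn
  have hm' : r.f m = r.f (N + (m - N)) := by congr 1; omega
  have hn' : r.f n = r.f (N + (n - N)) := by congr 1; omega
  rw [hm', hn']
  exact (key _).symm.trans (key _)

lemma sameComp_refl {F : Set (Sym2 V)} (hF : F.Finite) (r : Ray G) : SameComp G F r r := by
  obtain ⟨N, hN⟩ := r.exists_avoid hF
  exact ⟨N, r.reach_of_avoid hN⟩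

lemma SameComp.symm {F : Set (Sym2 V)} {r s : Ray G} (h : SameComp G F r s) :
    SameComp G F s r := by
  obtain ⟨N, hN⟩ := h
  exact ⟨N, fun m n hm hn => (hN n m hn hm).symm⟩

lemma SameComp.trans {F : Set (Sym2 V)} {r s t : Ray G}
    (h1 : SameComp G F r s) (h2 : SameComp G F s t) : SameComp G F r t := by
  obtain ⟨N1, hN1⟩ := h1
  obtain ⟨N2, hN2⟩ := h2
  refine ⟨max N1 N2, fun m n hm hn => ?_⟩
  exact (hN1 m (max N1 N2) (le_trans (le_max_left _ _) hm) (le_max_left _ _)).trans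
    (hN2 _ n (le_max_right _ _) (le_trans (le_max_right _ _) hn))

lemma edgeEquiv_equivalence : Equivalence (EdgeEquiv G) where
  refl r := fun _ hF => sameComp_refl hF r
  symm h := fun F hF => (h F hF).symm
  trans h1 h2 := fun F hF => (h1 F hF).trans (h2 F hF)

lemma edgeEquiv_of_edgeEnd_eq {r s : Ray G} (h : r.edgeEnd = s.edgeEnd) : EdgeEquiv G r s :=
  (Equivalence.eqvGen_iff edgeEquiv_equivalence).mp (Quot.eq.mp h)

lemma reach_mono {F F' : Set (Sym2 V)} (h : F ⊆ F') {u v : V}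
    (hr : (G.deleteEdges F').Reachable u v) : (G.deleteEdges F).Reachable u v :=
  hr.mono (SimpleGraph.deleteEdges_anti h)




lemma CE_closed {F : Set (Sym2 V)} {ω : EdgeEnd G} {v w : V}
    (hv : v ∈ CE G F ω) (hr : (G.deleteEdges F).Reachable v w) : w ∈ CE G F ω := by
  obtain ⟨r, hre, N, hN⟩ := hv
  exact ⟨r, hre, N, fun n hn => (hN n hn).trans hr⟩

lemma tail_mem_CE {F : Set (Sym2 V)} (hF : F.Finite) {r : Ray G} {ω : EdgeEnd G}
    (hr : r.edgeEnd = ω) : ∃ N, ∀ n, N ≤ n → r.f n ∈ CE G F ω := by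
  obtain ⟨N, hN⟩ := r.exists_avoid hF
  exact ⟨N, fun n hn => ⟨r, hr, N, fun k hk => r.reach_of_avoid hN k n hk hn⟩⟩

/-- If a tail of `s` lies in `CE G F ω` then `s` is in the same component as any
representative of `ω`. -/
lemma sameComp_of_tail_in_CE {F : Set (Sym2 V)} (hF : F.Finite) {r s : Ray G} {ω : EdgeEnd G}
    (hr : r.edgeEnd = ω) {N : ℕ} (hs : ∀ n, N ≤ n → s.f n ∈ CE G F ω) :
    SameComp G F r s := by
  obtain ⟨M, hM⟩ := r.exists_avoid hF
  refine ⟨max M N, fun m n hm hn => ?_⟩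
  have hsn := hs n (le_trans (le_max_right _ _) hn)
  obtain ⟨r₁, hr₁e, N₁, hN₁⟩ := hsn
  have hequiv : EdgeEquiv G r r₁ := edgeEquiv_of_edgeEnd_eq (by rw [hr, hr₁e])
  obtain ⟨N₂, hN₂⟩ := hequiv F hF
  -- r.f m ~ r.f (max M N₂) ~ r₁.f (max N₁ N₂) ~ s.f n
  have h1 : (G.deleteEdges F).Reachable (r.f m) (r.f (max M N₂)) :=
    r.reach_of_avoid hM m (max M N₂) (le_trans (le_max_left _ _) hm) (le_max_left _ _)
  have h2 : (G.deleteEdges F).Reachable (r.f (max M N₂)) (r₁.f (max N₁ N₂)) :=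
    hN₂ _ _ (le_max_right _ _) (le_max_right _ _)
  have h3 : (G.deleteEdges F).Reachable (r₁.f (max N₁ N₂)) (s.f n) :=
    hN₁ _ (le_max_left _ _)
  exact (h1.trans h2).trans h3

lemma mem_OmegaE_self {F : Set (Sym2 V)} (hF : F.Finite) (ω : EdgeEnd G) :
    ω ∈ OmegaE G F ω := by
  obtain ⟨r, hr⟩ := Quot.exists_rep ω
  exact ⟨r, r, hr, hr, sameComp_refl hF r⟩

lemma CE_anti {F F' : Set (Sym2 V)} (h : F ⊆ F') (ω : EdgeEnd G) :
    CE G F' ω ⊆ CE G F ω := by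
  rintro v ⟨r, hre, N, hN⟩
  exact ⟨r, hre, N, fun n hn => reach_mono h (hN n hn)⟩

lemma OmegaE_anti {F F' : Set (Sym2 V)} (h : F ⊆ F') (ω : EdgeEnd G) :
    OmegaE G F' ω ⊆ OmegaE G F ω := by
  rintro η ⟨r, s, hre, hse, N, hN⟩
  exact ⟨r, s, hre, hse, N, fun m n hm hn => reach_mono h (hN m n hm hn)⟩

lemma EHatBasic_anti {F F' : Set (Sym2 V)} (h : F ⊆ F') (ω : EdgeEnd G) :
    EHatBasic G F' ω ⊆ EHatBasic G F ω := by
  rintro x (⟨v, hv, rfl⟩ | ⟨η, hη, rfl⟩)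
  · exact Or.inl ⟨v, CE_anti h ω hv, rfl⟩
  · exact Or.inr ⟨η, OmegaE_anti h ω hη, rfl⟩

lemma EHatBasic_subset_of_mem {F : Set (Sym2 V)} (hF : F.Finite) {ω ω' : EdgeEnd G}
    (h : ω ∈ OmegaE G F ω') : EHatBasic G F ω ⊆ EHatBasic G F ω' := by
  obtain ⟨r₀, s₀, hr₀, hs₀, hsc⟩ := h
  have hCE : CE G F ω ⊆ CE G F ω' := by
    rintro v ⟨r₁, hr₁, N₁, hN₁⟩
    have hequiv : EdgeEquiv G s₀ r₁ := edgeEquiv_of_edgeEnd_eq (by rw [hs₀, hr₁])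
    have hsc' : SameComp G F r₀ r₁ := hsc.trans (hequiv F hF)
    obtain ⟨N₂, hN₂⟩ := hsc'
    refine ⟨r₀, hr₀, N₂, fun n hn => ?_⟩
    exact (hN₂ n (max N₁ N₂) hn (le_max_right _ _)).trans (hN₁ _ (le_max_left _ _))
  have hOm : OmegaE G F ω ⊆ OmegaE G F ω' := by
    rintro η ⟨r₁, s₁, hr₁, hs₁, hsc₁⟩
    have hequiv : EdgeEquiv G s₀ r₁ := edgeEquiv_of_edgeEnd_eq (by rw [hs₀, hr₁])
    exact ⟨r₀, s₁, hr₀, hs₁, (hsc.trans (hequiv F hF)).trans hsc₁⟩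
  rintro x (⟨v, hv, rfl⟩ | ⟨η, hη, rfl⟩)
  · exact Or.inl ⟨v, hCE hv, rfl⟩
  · exact Or.inr ⟨η, hOm hη, rfl⟩

lemma inr_mem_EHatBasic {F : Set (Sym2 V)} (hF : F.Finite) (ω : EdgeEnd G) :
    (Sum.inr ω : V ⊕ EdgeEnd G) ∈ EHatBasic G F ω :=
  Or.inr ⟨ω, mem_OmegaE_self hF ω, rfl⟩

lemma cut_CE_subset {F : Set (Sym2 V)} (ω : EdgeEnd G) : cut G (CE G F ω) ⊆ F := by
  rintro e ⟨he, u, v, rfl, hu, hv⟩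
  by_contra hne
  refine hv (CE_closed hu (SimpleGraph.Adj.reachable ?_))
  rw [SimpleGraph.deleteEdges_adj]
  exact ⟨G.mem_edgeSet.mp he, hne⟩

/-- From discreteness, extract a basic neighborhood around an end. -/
lemma extract_basic {T : Set (V ⊕ EdgeEnd G)}
    (hT : ∀ t ∈ T, ∃ U : Set (V ⊕ EdgeEnd G), @IsOpen _ (eHatTopology G) U ∧ U ∩ T = {t})
    {ω : EdgeEnd G} (hω : Sum.inr ω ∈ T) :
    ∃ F : Set (Sym2 V), F.Finite ∧ F ⊆ G.edgeSet ∧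
      EHatBasic G F ω ∩ T = {Sum.inr ω} := by
  obtain ⟨U, hUopen, hUT⟩ := hT _ hω
  have hmemU : (Sum.inr ω : V ⊕ EdgeEnd G) ∈ U := by
    have : (Sum.inr ω : V ⊕ EdgeEnd G) ∈ U ∩ T := hUT ▸ rfl
    exact this.1
  have hgen : TopologicalSpace.GenerateOpen
      ({U | ∃ v : V, U = {Sum.inl v}} ∪
        {U | ∃ (F : Set (Sym2 V)) (ω : EdgeEnd G),
          F.Finite ∧ F ⊆ G.edgeSet ∧ U = EHatBasic G F ω}) U := hUopen
  have key : ∀ W, TopologicalSpace.GenerateOpen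
      ({U | ∃ v : V, U = {Sum.inl v}} ∪
        {U | ∃ (F : Set (Sym2 V)) (ω : EdgeEnd G),
          F.Finite ∧ F ⊆ G.edgeSet ∧ U = EHatBasic G F ω}) W →
      ∀ ω' : EdgeEnd G, (Sum.inr ω' : V ⊕ EdgeEnd G) ∈ W →
      ∃ F : Set (Sym2 V), F.Finite ∧ F ⊆ G.edgeSet ∧ EHatBasic G F ω' ⊆ W := by
    intro W hW
    induction hW with
    | basic W hWmem =>
      intro ω' hmem
      rcases hWmem with ⟨v, rfl⟩ | ⟨F, ω'', hFfin, hFsub, rfl⟩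
      · simp at hmem
      · rcases hmem with ⟨v, _, hv⟩ | ⟨η, hη, hη'⟩
        · exact absurd hv (by simp)
        · have : η = ω' := Sum.inr.inj hη'
          subst this
          exact ⟨F, hFfin, hFsub, EHatBasic_subset_of_mem hFfin hη⟩
    | univ => exact fun ω' _ => ⟨∅, Set.finite_empty, Set.empty_subset _, Set.subset_univ _⟩
    | inter U₁ U₂ _ _ ih1 ih2 =>
      intro ω' hmem
      obtain ⟨F₁, h1f, h1s, h1⟩ := ih1 ω' hmem.1
      obtain ⟨F₂, h2f, h2s, h2⟩ := ih2 ω' hmem.2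
      refine ⟨F₁ ∪ F₂, h1f.union h2f, Set.union_subset h1s h2s, ?_⟩
      intro x hx
      exact ⟨h1 (EHatBasic_anti Set.subset_union_left ω' hx),
        h2 (EHatBasic_anti Set.subset_union_right ω' hx)⟩
    | sUnion S _ ih =>
      intro ω' hmem
      obtain ⟨W', hW'S, hmem'⟩ := hmem
      obtain ⟨F, hf, hs, hsub⟩ := ih W' hW'S ω' hmem'
      exact ⟨F, hf, hs, hsub.trans (Set.subset_sUnion_of_mem hW'S)⟩
  obtain ⟨F, hFfin, hFsub, hFU⟩ := key U hgen ω hmemU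
  refine ⟨F, hFfin, hFsub, ?_⟩
  apply Set.Subset.antisymm
  · intro x hx
    rw [← hUT]
    exact ⟨hFU hx.1, hx.2⟩
  · rintro x rfl
    exact ⟨inr_mem_EHatBasic hFfin ω, hω⟩


end Aux

-- MARKER START chunk3
section MoreAux
variable {G}

lemma eventually_not_mem_CE {F₀ : Set (Sym2 V)} (hF₀ : F₀.Finite) {ω η : EdgeEnd G}
    {T : Set (V ⊕ EdgeEnd G)} (hsep : EHatBasic G F₀ ω ∩ T = {Sum.inr ω})
    (hη : Sum.inr η ∈ T) (hne : η ≠ ω) {s : Ray G} (hs : s.edgeEnd = η) :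
    ∃ N, ∀ n, N ≤ n → s.f n ∉ CE G F₀ ω := by
  obtain ⟨M, hM⟩ := s.exists_avoid hF₀
  refine ⟨M, fun n hn hmem => ?_⟩
  have hall : ∀ m, M ≤ m → s.f m ∈ CE G F₀ ω :=
    fun m hm => CE_closed hmem (s.reach_of_avoid hM n m hn hm)
  obtain ⟨r, hr⟩ := Quot.exists_rep ω
  have hr' : r.edgeEnd = ω := hr
  have sc : SameComp G F₀ r s := sameComp_of_tail_in_CE hF₀ hr' hall
  have hmemT : (Sum.inr η : V ⊕ EdgeEnd G) ∈ EHatBasic G F₀ ω ∩ T :=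
    ⟨Or.inr ⟨η, ⟨r, s, hr', hs, sc⟩, rfl⟩, hη⟩
  rw [hsep, Set.mem_singleton_iff] at hmemT
  exact hne (Sum.inr.inj hmemT)

lemma walk_cross {X : Set V} {u v : V} (p : G.Walk u v) (hu : u ∈ X) (hv : v ∉ X) :
    ∃ a b, G.Adj a b ∧ a ∈ X ∧ b ∉ X ∧ a ∈ p.support ∧ b ∈ p.support := by
  induction p with
  | nil => exact absurd hu hv
  | @cons a b c h q ih =>
    by_cases hb : b ∈ X
    · obtain ⟨x, y, hxy, hx, hy, hxs, hys⟩ := ih hb hv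
      exact ⟨x, y, hxy, hx, hy,
        by rw [SimpleGraph.Walk.support_cons]; exact List.mem_cons_of_mem _ hxs,
        by rw [SimpleGraph.Walk.support_cons]; exact List.mem_cons_of_mem _ hys⟩
    · exact ⟨a, b, h, hu, hb, SimpleGraph.Walk.start_mem_support _,
        by rw [SimpleGraph.Walk.support_cons];
           exact List.mem_cons_of_mem _ (SimpleGraph.Walk.start_mem_support _)⟩

lemma ray_walk_in {r : Ray G} {X : Set V} {n m : ℕ} (hnm : n ≤ m)
    (h : ∀ k, n ≤ k → k ≤ m → r.f k ∈ X) :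
    ∃ p : G.Walk (r.f n) (r.f m), ∀ x ∈ p.support, x ∈ X := by
  have key : ∀ d, (∀ k, n ≤ k → k ≤ n + d → r.f k ∈ X) →
      ∃ p : G.Walk (r.f n) (r.f (n + d)), ∀ x ∈ p.support, x ∈ X := by
    intro d
    induction d with
    | zero =>
      intro hd
      refine ⟨SimpleGraph.Walk.nil, fun x hx => ?_⟩
      rw [SimpleGraph.Walk.support_nil, List.mem_singleton] at hx
      subst hx; exact hd n le_rfl (by omega)
    | succ d ih =>
      intro hd
      obtain ⟨p, hp⟩ := ih (fun k h1 h2 => hd k h1 (by omega))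
      refine ⟨p.concat (by rw [← Nat.add_assoc]; exact r.adj (n + d)), fun x hx => ?_⟩
      rw [SimpleGraph.Walk.support_concat, List.mem_append,
        List.mem_singleton] at hx
      rcases hx with hx | hx
      · exact hp x hx
      · subst hx; exact hd _ (by omega) (by omega)
  obtain ⟨d, rfl⟩ : ∃ d, m = n + d := ⟨m - n, by omega⟩
  exact key d h

end MoreAux

section Construction

variable (T : Set (V ⊕ EdgeEnd G)) (F : EdgeEnd G → Set (Sym2 V)) (rep : EdgeEnd G → Ray G)

open scoped Classical in
/-- The transfinite construction: at stage `ω`, take the connected component of the tail of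
`rep ω` inside `CE G (F ω) ω` minus all earlier regions. -/
noncomputable def DAux : EdgeEnd G → Set V :=
  (IsWellFounded.wf (r := @WellOrderingRel (EdgeEnd G))).fix fun ω Dprev =>
    if Sum.inr ω ∈ T then
      {v | ∃ n : ℕ,
        (∀ m, n ≤ m → (rep ω).f m ∈
          CE G (F ω) ω \ ⋃ η, ⋃ _h : WellOrderingRel η ω, Dprev η _h) ∧
        ∃ p : G.Walk ((rep ω).f n) v, ∀ x ∈ p.support, x ∈
          CE G (F ω) ω \ ⋃ η, ⋃ _h : WellOrderingRel η ω, Dprev η _h}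
    else ∅

/-- Union of all earlier regions. -/
def UAux (ω : EdgeEnd G) : Set V := ⋃ η, ⋃ _h : WellOrderingRel η ω, DAux G T F rep η

/-- The ambient set for the region of `ω`. -/
def SAux (ω : EdgeEnd G) : Set V := CE G (F ω) ω \ UAux G T F rep ω

open scoped Classical in
lemma DAux_spec (ω : EdgeEnd G) : DAux G T F rep ω =
    if Sum.inr ω ∈ T then
      {v | ∃ n : ℕ, (∀ m, n ≤ m → (rep ω).f m ∈ SAux G T F rep ω) ∧
        ∃ p : G.Walk ((rep ω).f n) v, ∀ x ∈ p.support, x ∈ SAux G T F rep ω}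
    else ∅ := by
  conv_lhs => rw [DAux]
  rw [WellFounded.fix_eq]
  rfl

lemma DAux_empty {ω : EdgeEnd G} (h : Sum.inr ω ∉ T) : DAux G T F rep ω = ∅ := by
  rw [DAux_spec]; simp [h]

lemma DAux_subset (ω : EdgeEnd G) : DAux G T F rep ω ⊆ SAux G T F rep ω := by
  rw [DAux_spec]
  split
  · rintro v ⟨n, hn, p, hp⟩
    exact hp v p.end_mem_support
  · exact Set.empty_subset _

lemma mem_DAux {ω : EdgeEnd G} (hω : Sum.inr ω ∈ T) {n : ℕ}
    (hn : ∀ m, n ≤ m → (rep ω).f m ∈ SAux G T F rep ω) {v : V}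
    (p : G.Walk ((rep ω).f n) v) (hp : ∀ x ∈ p.support, x ∈ SAux G T F rep ω) :
    v ∈ DAux G T F rep ω := by
  rw [DAux_spec]
  classical
  rw [if_pos hω]
  exact ⟨n, hn, p, hp⟩

lemma subset_UAux {η ω : EdgeEnd G} (h : WellOrderingRel η ω) :
    DAux G T F rep η ⊆ UAux G T F rep ω :=
  fun v hv => Set.mem_iUnion.mpr ⟨η, Set.mem_iUnion.mpr ⟨h, hv⟩⟩

lemma DAux_disjoint {η₁ η₂ : EdgeEnd G} (hne : η₁ ≠ η₂) :
    DAux G T F rep η₁ ∩ DAux G T F rep η₂ = ∅ := by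
  have key : ∀ a b : EdgeEnd G, WellOrderingRel a b →
      DAux G T F rep a ∩ DAux G T F rep b = ∅ := by
    intro a b hab
    ext v
    simp only [Set.mem_inter_iff, Set.mem_empty_iff_false, iff_false, not_and]
    intro ha hb
    exact (DAux_subset G T F rep b hb).2 (subset_UAux G T F rep hab ha)
  rcases trichotomous_of WellOrderingRel η₁ η₂ with h | h | h
  · exact key _ _ h
  · exact absurd h hne
  · rw [Set.inter_comm]; exact key _ _ h

lemma DAux_walk {ω : EdgeEnd G} (hω : Sum.inr ω ∈ T) {u v : V}
    (hu : u ∈ DAux G T F rep ω) (hv : v ∈ DAux G T F rep ω) :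
    ∃ p : G.Walk u v, ∀ x ∈ p.support, x ∈ DAux G T F rep ω := by
  classical
  rw [DAux_spec, if_pos hω] at hu hv
  obtain ⟨n₁, hn₁, p₁, hp₁⟩ := hu
  obtain ⟨n₂, hn₂, p₂, hp₂⟩ := hv
  -- a walk between the two base points along the ray
  have hseg : ∃ W : G.Walk ((rep ω).f n₁) ((rep ω).f n₂),
      ∀ x ∈ W.support, x ∈ SAux G T F rep ω := by
    rcases le_total n₁ n₂ with h | h
    · exact ray_walk_in h (fun k hk _ => hn₁ k hk)
    · obtain ⟨W, hW⟩ := ray_walk_in h (fun k hk _ => hn₂ k hk)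
      refine ⟨W.reverse, fun x hx => hW x ?_⟩
      rwa [SimpleGraph.Walk.support_reverse, List.mem_reverse] at hx
  obtain ⟨W, hW⟩ := hseg
  -- every vertex having a walk from the base with support in S is in DAux
  have hbase : ∀ x : V, (∃ q : G.Walk ((rep ω).f n₁) x,
      ∀ y ∈ q.support, y ∈ SAux G T F rep ω) → x ∈ DAux G T F rep ω := by
    rintro x ⟨q, hq⟩
    exact mem_DAux G T F rep hω hn₁ q hq
  -- the combined walk
  refine ⟨p₁.reverse.append (W.append p₂), fun x hx => ?_⟩
  rw [SimpleGraph.Walk.mem_support_append_iff] at hx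
  rcases hx with hx | hx
  · rw [SimpleGraph.Walk.support_reverse, List.mem_reverse] at hx
    exact hbase x ⟨p₁.takeUntil x hx, fun y hy =>
      hp₁ y (SimpleGraph.Walk.support_takeUntil_subset _ _ hy)⟩
  · rw [SimpleGraph.Walk.mem_support_append_iff] at hx
    rcases hx with hx | hx
    · exact hbase x ⟨W.takeUntil x hx, fun y hy =>
        hW y (SimpleGraph.Walk.support_takeUntil_subset _ _ hy)⟩
    · refine hbase x ⟨W.append (p₂.takeUntil x hx), fun y hy => ?_⟩
      rw [SimpleGraph.Walk.mem_support_append_iff] at hy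
      rcases hy with hy | hy
      · exact hW y hy
      · exact hp₂ y (SimpleGraph.Walk.support_takeUntil_subset _ _ hy)

end Construction
-- MARKER END chunk3

-- MARKER START chunk4
section Main

/-- The key verification: a region with finite cut, containing a tail of `ω`,
inside a separating basic region, is itself separating. -/
lemma EHat_of_region {G : SimpleGraph V} {T : Set (V ⊕ EdgeEnd G)} {F₀ : Set (Sym2 V)}
    {ω : EdgeEnd G} {D : Set V}
    (hω : Sum.inr ω ∈ T) {r : Ray G} (hr : r.edgeEnd = ω) (hF₀ : F₀.Finite)
    (hsep : EHatBasic G F₀ ω ∩ T = {Sum.inr ω}) (hsub : D ⊆ CE G F₀ ω)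
    (hcut : (cut G D).Finite) (htail : ∃ n, ∀ m, n ≤ m → r.f m ∈ D) :
    EHatBasic G (cut G D) ω ∩ T = {Sum.inr ω} := by
  have clo : ∀ {a b : V} (_ : (G.deleteEdges (cut G D)).Walk a b), a ∈ D → b ∈ D := by
    intro a b p
    induction p with
    | nil => exact id
    | @cons x y z h q ih =>
      intro hx
      refine ih ?_
      have h' := (SimpleGraph.deleteEdges_adj).mp h
      by_contra hy
      exact h'.2 ⟨G.mem_edgeSet.mpr h'.1, x, y, rfl, hx, hy⟩
  have clo' : ∀ a b : V, (G.deleteEdges (cut G D)).Reachable a b → a ∈ D → b ∈ D :=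
    fun a b h ha => h.elim (fun p => clo p ha)
  obtain ⟨n₀, hn₀⟩ := htail
  have htail' : ∀ r₁ : Ray G, r₁.edgeEnd = ω → ∃ N, ∀ k, N ≤ k → r₁.f k ∈ D := by
    intro r₁ hr₁
    have hequiv : EdgeEquiv G r₁ r := edgeEquiv_of_edgeEnd_eq (by rw [hr₁, hr])
    obtain ⟨N₂, hN₂⟩ := hequiv (cut G D) hcut
    refine ⟨N₂, fun k hk => ?_⟩
    have hreach := hN₂ k (max N₂ n₀) hk (le_max_left _ _)
    exact clo' _ _ hreach.symm (hn₀ _ (le_max_right _ _))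
  have hCEsub : CE G (cut G D) ω ⊆ D := by
    rintro v ⟨r₁, hr₁, N₁, hN₁⟩
    obtain ⟨N, hN⟩ := htail' r₁ hr₁
    exact clo' _ _ (hN₁ (max N N₁) (le_max_right _ _)) (hN _ (le_max_left _ _))
  apply Set.Subset.antisymm
  · rintro x ⟨hx, hxT⟩
    rcases hx with ⟨w, hw, rfl⟩ | ⟨η, hη, rfl⟩
    · exfalso
      have hwD : w ∈ D := hCEsub hw
      have hmem : (Sum.inl w : V ⊕ EdgeEnd G) ∈ EHatBasic G F₀ ω ∩ T :=
        ⟨Or.inl ⟨w, hsub hwD, rfl⟩, hxT⟩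
      rw [hsep, Set.mem_singleton_iff] at hmem
      exact absurd hmem (by simp)
    · obtain ⟨r₁, s, hr₁, hs, Nc, hNc⟩ := hη
      obtain ⟨N, hN⟩ := htail' r₁ hr₁
      have hstail : ∀ n, Nc ≤ n → s.f n ∈ CE G F₀ ω := by
        intro n hn
        have hreach := hNc (max N Nc) n (le_max_right _ _) hn
        exact hsub (clo' _ _ hreach (hN _ (le_max_left _ _)))
      have sc : SameComp G F₀ r s := sameComp_of_tail_in_CE hF₀ hr hstail
      have hmem : (Sum.inr η : V ⊕ EdgeEnd G) ∈ EHatBasic G F₀ ω ∩ T :=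
        ⟨Or.inr ⟨η, ⟨r, s, hr, hs, sc⟩, rfl⟩, hxT⟩
      rw [hsep] at hmem
      exact hmem
  · rintro x rfl
    exact ⟨inr_mem_EHatBasic hcut ω, hω⟩

/-- The main invariant of the transfinite construction. -/
lemma DAux_main (T : Set (V ⊕ EdgeEnd G)) (F : EdgeEnd G → Set (Sym2 V))
    (rep : EdgeEnd G → Ray G)
    (hrep : ∀ ω, (rep ω).edgeEnd = ω)
    (hFfin : ∀ ω, Sum.inr ω ∈ T → (F ω).Finite)
    (hsep : ∀ ω, Sum.inr ω ∈ T → EHatBasic G (F ω) ω ∩ T = {Sum.inr ω}) :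
    ∀ ω : EdgeEnd G, Sum.inr ω ∈ T →
      (∃ n, ∀ m, n ≤ m → (rep ω).f m ∈ DAux G T F rep ω) ∧
      (cut G (DAux G T F rep ω)).Finite := by
  classical
  have hirr : ∀ η : EdgeEnd G, ¬ WellOrderingRel η η := fun η => _root_.irrefl η
  intro ω₀
  induction ω₀ using WellFounded.induction (IsWellFounded.wf (r := @WellOrderingRel (EdgeEnd G))) with
  | _ ω IH =>
  intro hω
  have hFf := hFfin ω hω
  have hsepω := hsep ω hω
  -- the set of earlier stages whose region meets `CE G (F ω) ω`
  set Bset : Set (EdgeEnd G) := {η | WellOrderingRel η ω ∧ Sum.inr η ∈ T ∧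
    (DAux G T F rep η ∩ CE G (F ω) ω).Nonempty} with hBset_def
  have hBT : ∀ η ∈ Bset, Sum.inr η ∈ T := fun η hη => hη.2.1
  have hBrel : ∀ η ∈ Bset, WellOrderingRel η ω := fun η hη => hη.1
  -- each such stage pins down a private edge of `F ω`
  have hBsetsub : Bset ⊆ ⋃ e ∈ F ω, {η : EdgeEnd G | ∃ a b : V,
      e = s(a, b) ∧ a ∈ DAux G T F rep η ∧ b ∈ DAux G T F rep η} := by
    rintro η ⟨hrel, hηT, v, hvD, hvC⟩
    have hne : η ≠ ω := by rintro rfl; exact hirr η hrel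
    obtain ⟨⟨nη, hnη⟩, -⟩ := IH η hrel hηT
    obtain ⟨K, hK⟩ := eventually_not_mem_CE hFf hsepω hηT hne (hrep η)
    have hwD : (rep η).f (max nη K) ∈ DAux G T F rep η := hnη _ (le_max_left _ _)
    have hwC : (rep η).f (max nη K) ∉ CE G (F ω) ω := hK _ (le_max_right _ _)
    obtain ⟨p, hp⟩ := DAux_walk G T F rep hηT hvD hwD
    obtain ⟨a, b, hab, haC, hbC, has, hbs⟩ := walk_cross p hvC hwC
    have heF : s(a, b) ∈ F ω :=
      cut_CE_subset ω ⟨G.mem_edgeSet.mpr hab, a, b, rfl, haC, hbC⟩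
    exact Set.mem_biUnion heF ⟨a, b, rfl, hp a has, hp b hbs⟩
  have hPe : ∀ e : Sym2 V, ({η : EdgeEnd G | ∃ a b : V,
      e = s(a, b) ∧ a ∈ DAux G T F rep η ∧ b ∈ DAux G T F rep η}).Subsingleton := by
    intro e η₁ hη₁ η₂ hη₂
    by_contra hne
    obtain ⟨a₁, b₁, he₁, ha₁, hb₁⟩ := hη₁
    obtain ⟨a₂, b₂, he₂, ha₂, hb₂⟩ := hη₂
    rw [he₁] at he₂
    have hcommon : ∃ x, x ∈ DAux G T F rep η₁ ∩ DAux G T F rep η₂ := by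
      rcases Sym2.eq_iff.mp he₂ with ⟨h1, _⟩ | ⟨h1, _⟩
      · exact ⟨a₁, ha₁, by rw [h1]; exact ha₂⟩
      · exact ⟨a₁, ha₁, by rw [h1]; exact hb₂⟩
    obtain ⟨x, hx⟩ := hcommon
    rw [DAux_disjoint G T F rep hne] at hx
    exact hx
  have hBfin : Bset.Finite :=
    Set.Finite.subset (hFf.biUnion (fun e _ => (hPe e).finite)) hBsetsub
  -- the tail of `rep ω` eventually avoids all earlier regions
  obtain ⟨N₀, hN₀⟩ := tail_mem_CE hFf (hrep ω)
  have hbadsub : {m : ℕ | N₀ ≤ m ∧ (rep ω).f m ∈ UAux G T F rep ω} ⊆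
      ⋃ η ∈ Bset, {m : ℕ | (rep ω).f m ∈ CE G (F η) η} := by
    rintro m ⟨hm, hmem⟩
    obtain ⟨η, hmem⟩ := Set.mem_iUnion.mp hmem
    obtain ⟨hrel, hmem⟩ := Set.mem_iUnion.mp hmem
    have hηT : Sum.inr η ∈ T := by
      by_contra hc
      rw [DAux_empty G T F rep hc] at hmem
      exact hmem
    have hηB : η ∈ Bset := ⟨hrel, hηT, ⟨(rep ω).f m, hmem, hN₀ m hm⟩⟩
    exact Set.mem_biUnion hηB ((DAux_subset G T F rep η hmem).1)
  have hbadfin : ({m : ℕ | N₀ ≤ m ∧ (rep ω).f m ∈ UAux G T F rep ω}).Finite := by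
    refine Set.Finite.subset (hBfin.biUnion (fun η hη => ?_)) hbadsub
    have hne : ω ≠ η := by rintro rfl; exact hirr ω (hBrel _ hη)
    obtain ⟨K, hK⟩ := eventually_not_mem_CE (hFfin η (hBT _ hη)) (hsep η (hBT _ hη)) hω hne (hrep ω)
    refine (Set.finite_Iio K).subset (fun m hm => ?_)
    by_contra hc
    simp only [Set.mem_Iio, not_lt] at hc
    exact hK m hc hm
  obtain ⟨B, hB⟩ := hbadfin.bddAbove
  have hNS : ∀ m, max N₀ (B + 1) ≤ m → (rep ω).f m ∈ SAux G T F rep ω := by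
    intro m hm
    have h1 : (rep ω).f m ∈ CE G (F ω) ω := hN₀ m (le_trans (le_max_left _ _) hm)
    refine ⟨h1, fun hU => ?_⟩
    have hmem : m ∈ {m : ℕ | N₀ ≤ m ∧ (rep ω).f m ∈ UAux G T F rep ω} :=
      ⟨le_trans (le_max_left _ _) hm, hU⟩
    have := hB hmem
    have := le_trans (le_max_right _ _) hm
    omega
  have htail : ∀ m, max N₀ (B + 1) ≤ m → (rep ω).f m ∈ DAux G T F rep ω := by
    intro m hm
    obtain ⟨p, hp⟩ := ray_walk_in (r := rep ω) hm (fun k hk _ => hNS k hk)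
    exact mem_DAux G T F rep hω hNS p hp
  refine ⟨⟨max N₀ (B + 1), htail⟩, ?_⟩
  -- finiteness of the cut
  have hcutsub : cut G (DAux G T F rep ω) ⊆
      F ω ∪ ⋃ η ∈ Bset, cut G (DAux G T F rep η) := by
    rintro e ⟨he, u, v, rfl, hu, hv⟩
    have huS := DAux_subset G T F rep ω hu
    by_cases hvC : v ∈ CE G (F ω) ω
    · by_cases hvU : v ∈ UAux G T F rep ω
      · obtain ⟨η, hmem⟩ := Set.mem_iUnion.mp hvU
        obtain ⟨hrel, hvD⟩ := Set.mem_iUnion.mp hmem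
        have hηT : Sum.inr η ∈ T := by
          by_contra hc
          rw [DAux_empty G T F rep hc] at hvD
          exact hvD
        have hηB : η ∈ Bset := ⟨hrel, hηT, ⟨v, hvD, hvC⟩⟩
        have huD : u ∉ DAux G T F rep η := fun hc => huS.2 (subset_UAux G T F rep hrel hc)
        exact Or.inr (Set.mem_biUnion hηB ⟨he, v, u, Sym2.eq_swap.symm, hvD, huD⟩)
      · exfalso
        rw [DAux_spec, if_pos hω] at hu
        obtain ⟨n, hn, p, hp⟩ := hu
        have hAdj : G.Adj u v := G.mem_edgeSet.mp he
        refine hv (mem_DAux G T F rep hω hn (p.concat hAdj) ?_)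
        intro x hx
        rw [SimpleGraph.Walk.support_concat, List.mem_append,
          List.mem_singleton] at hx
        rcases hx with hx | hx
        · exact hp x hx
        · subst hx; exact ⟨hvC, hvU⟩
    · exact Or.inl (cut_CE_subset ω ⟨he, u, v, rfl, huS.1, hvC⟩)
  exact Set.Finite.subset
    (hFf.union (hBfin.biUnion (fun η hη => (IH η (hBrel _ hη) (hBT _ hη)).2)))
    hcutsub

end Main
-- MARKER END chunk4

/-- For a discrete subspace `T ⊆ Ê(G)` there is a family `{C_ω : ω ∈ T ∩ Ω_E(G)}` of
disjoint connected subgraphs of `G` such that each cut `F_ω = δ(C_ω)` is finite and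
`Ê(F_ω, ω) ∩ T = {ω}`. -/
theorem discrete_edgeEnd_separation (T : Set (V ⊕ EdgeEnd G))
    (hT : ∀ t ∈ T, ∃ U : Set (V ⊕ EdgeEnd G), @IsOpen _ (eHatTopology G) U ∧ U ∩ T = {t}) :
    ∃ C : EdgeEnd G → Set V,
      (∀ ω : EdgeEnd G, Sum.inr ω ∈ T → ConnectedIn G (C ω)) ∧
      (∀ ω₁ ω₂ : EdgeEnd G, Sum.inr ω₁ ∈ T → Sum.inr ω₂ ∈ T → ω₁ ≠ ω₂ → C ω₁ ∩ C ω₂ = ∅) ∧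
      (∀ ω : EdgeEnd G, Sum.inr ω ∈ T →
        (cut G (C ω)).Finite ∧ EHatBasic G (cut G (C ω)) ω ∩ T = {Sum.inr ω}) := by
  classical
  have hex : ∀ ω : EdgeEnd G, Sum.inr ω ∈ T → ∃ F : Set (Sym2 V), F.Finite ∧
      F ⊆ G.edgeSet ∧ EHatBasic G F ω ∩ T = {Sum.inr ω} := fun ω hω => extract_basic hT hω
  set F : EdgeEnd G → Set (Sym2 V) :=
    fun ω => if h : Sum.inr ω ∈ T then (hex ω h).choose else ∅ with hF_def
  have hFfin : ∀ ω, Sum.inr ω ∈ T → (F ω).Finite := by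
    intro ω h
    simp only [hF_def, dif_pos h]
    exact (hex ω h).choose_spec.1
  have hsep : ∀ ω, Sum.inr ω ∈ T → EHatBasic G (F ω) ω ∩ T = {Sum.inr ω} := by
    intro ω h
    simp only [hF_def, dif_pos h]
    exact (hex ω h).choose_spec.2.2
  set rep : EdgeEnd G → Ray G := fun ω => (Quot.exists_rep ω).choose with hrep_def
  have hrep : ∀ ω, (rep ω).edgeEnd = ω := fun ω => (Quot.exists_rep ω).choose_spec
  refine ⟨DAux G T F rep, ?_, ?_, ?_⟩
  · intro ω hω
    obtain ⟨⟨n, hn⟩, -⟩ := DAux_main G T F rep hrep hFfin hsep ω hω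
    exact ⟨⟨(rep ω).f n, hn n le_rfl⟩, fun u hu v hv => DAux_walk G T F rep hω hu hv⟩
  · intro ω₁ ω₂ _ _ hne
    exact DAux_disjoint G T F rep hne
  · intro ω hω
    obtain ⟨⟨n, hn⟩, hcut⟩ := DAux_main G T F rep hrep hFfin hsep ω hω
    refine ⟨hcut, ?_⟩
    exact EHat_of_region hω (hrep ω) (hFfin ω hω) (hsep ω hω)
      (fun v hv => (DAux_subset G T F rep ω hv).1) hcut ⟨n, hn⟩

end EdgeEndPaper
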